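/- Decryption correctness of Construction B updates: starting from ciphertext of bit string 0, after any sequence of valid add/delete operations (adding 2^i for an add of file i not currently present, adding 2^y - 2^i mod 2^y for a delete of file i currently present), the Paillier-decrypted value modulo 2^y equals the encoding of the current set of present files, provided 2^y < n and fewer than n/2^y total operations are performed. -/

import Mathlib

/-- The set of present files after one update operation
(`(true, i)` adds file i, `(false, i)` deletes file i). -/
def applySet (S : Finset ℕ) : Bool × ℕ → Finset ℕ
  | (true, i) => insert i S
  | (false, i) => S.erase i

/-- The plaintext added homomorphically for one operation on y-bit strings:
2^i for an addition, the two's complement 2^y - 2^i for a deletion. -/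
def delta (y : ℕ) : Bool × ℕ → ℕ
  | (true, i) => 2 ^ i
  | (false, i) => 2 ^ y - 2 ^ i

/-- Validity of a sequence of operations: each add concerns a file not present,
each delete a file present, and all file indices are below y. -/
def ValidOps (y : ℕ) : Finset ℕ → List (Bool × ℕ) → Prop
  | _, [] => True
  | S, op :: ops =>
      op.2 < y ∧ (if op.1 then op.2 ∉ S else op.2 ∈ S) ∧ ValidOps y (applySet S op) ops

lemma constructionB_aux (y : ℕ) (ops : List (Bool × ℕ)) :
    ∀ S : Finset ℕ, ValidOps y S ops → S ⊆ Finset.range y →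
      ops.foldl applySet S ⊆ Finset.range y ∧
      (ops.map (delta y)).sum ≤ ops.length * 2 ^ y ∧
      (∑ i ∈ S, 2 ^ i) + (ops.map (delta y)).sum ≡
        ∑ i ∈ ops.foldl applySet S, 2 ^ i [MOD 2 ^ y] := by
  induction ops with
  | nil => intro S _ hsub; simpa using ⟨hsub, Nat.ModEq.refl _⟩
  | cons op ops ih =>
    rintro S ⟨hlt, hmem, hrest⟩ hsub
    obtain ⟨b, i⟩ := op
    have h2i : 2 ^ i ≤ 2 ^ y := Nat.pow_le_pow_right (by norm_num) hlt.le
    cases b with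
    | true =>
      simp only [if_pos] at hmem
      have hsub' : insert i S ⊆ Finset.range y := by
        intro x hx
        rcases Finset.mem_insert.mp hx with rfl | hx
        · exact Finset.mem_range.mpr hlt
        · exact hsub hx
      obtain ⟨h1, h2, h3⟩ := ih (insert i S) hrest hsub'
      refine ⟨h1, ?_, ?_⟩
      · simp only [List.map_cons, List.sum_cons, List.length_cons]
        calc delta y (true, i) + (ops.map (delta y)).sum
            ≤ 2 ^ y + ops.length * 2 ^ y := by
              exact Nat.add_le_add (by simpa [delta] using h2i) h2
          _ = (ops.length + 1) * 2 ^ y := by ring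
      · simp only [List.map_cons, List.sum_cons, List.foldl_cons]
        have : (∑ x ∈ S, 2 ^ x) + (delta y (true, i) + (ops.map (delta y)).sum)
            = (∑ x ∈ insert i S, 2 ^ x) + (ops.map (delta y)).sum := by
          rw [Finset.sum_insert hmem]; simp only [delta]; ring
        rw [this]
        simpa [applySet] using h3
    | false =>
      simp only [if_neg] at hmem
      have hsub' : S.erase i ⊆ Finset.range y :=
        (Finset.erase_subset _ _).trans hsub
      obtain ⟨h1, h2, h3⟩ := ih (S.erase i) hrest hsub'
      refine ⟨h1, ?_, ?_⟩
      · simp only [List.map_cons, List.sum_cons, List.length_cons]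
        calc delta y (false, i) + (ops.map (delta y)).sum
            ≤ 2 ^ y + ops.length * 2 ^ y := by
              exact Nat.add_le_add (by simp [delta]) h2
          _ = (ops.length + 1) * 2 ^ y := by ring
      · simp only [List.map_cons, List.sum_cons, List.foldl_cons]
        have hS : (∑ x ∈ S, 2 ^ x) = (∑ x ∈ S.erase i, 2 ^ x) + 2 ^ i := by
          rw [Finset.sum_erase_add _ _ hmem]
        have heq : (∑ x ∈ S, 2 ^ x) + (delta y (false, i) + (ops.map (delta y)).sum)
            = ((∑ x ∈ S.erase i, 2 ^ x) + (ops.map (delta y)).sum) + 2 ^ y := by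
          rw [hS]; simp [delta]; omega
        rw [heq]
        calc ((∑ x ∈ S.erase i, 2 ^ x) + (ops.map (delta y)).sum) + 2 ^ y
            ≡ ((∑ x ∈ S.erase i, 2 ^ x) + (ops.map (delta y)).sum) + 0 [MOD 2 ^ y] :=
              Nat.ModEq.add_left _ (Nat.modEq_zero_iff_dvd.mpr dvd_rfl)
          _ = (∑ x ∈ S.erase i, 2 ^ x) + (ops.map (delta y)).sum := by ring
          _ ≡ ∑ x ∈ ops.foldl applySet (S.erase i), 2 ^ x [MOD 2 ^ y] := h3
          _ = ∑ x ∈ ops.foldl applySet (applySet S (false, i)), 2 ^ x := by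
              simp [applySet]

/-- Decryption correctness of Construction B: starting from an encryption of 0,
after any valid sequence of homomorphic add/delete operations (with plaintexts in
ℤ_n, 2^y < n and fewer than n / 2^y operations), the decrypted value reduced
modulo 2^y is the bit-string encoding of the current set of present files. -/
theorem constructionB_update_correct (n y : ℕ) (ops : List (Bool × ℕ))
    (hyn : 2 ^ y < n) (hvalid : ValidOps y ∅ ops) (hlen : ops.length < n / 2 ^ y) :
    ((ops.map (delta y)).sum % n) % 2 ^ y = ∑ i ∈ ops.foldl applySet ∅, 2 ^ i := by
  obtain ⟨h1, h2, h3⟩ := constructionB_aux y ops ∅ hvalid (by simp)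
  have hy0 : 0 < 2 ^ y := Nat.pow_pos (by norm_num)
  have hmul : (ops.length + 1) * 2 ^ y ≤ n := by
    have := (Nat.le_div_iff_mul_le hy0).mp (Nat.succ_le_of_lt hlen)
    simpa using this
  have hsum_lt : (ops.map (delta y)).sum < n :=
    lt_of_le_of_lt h2 (by nlinarith)
  rw [Nat.mod_eq_of_lt hsum_lt]
  have hfin : (∑ i ∈ ops.foldl applySet ∅, 2 ^ i) < 2 ^ y := by
    have hgeo : ∀ m : ℕ, ∑ i ∈ Finset.range m, 2 ^ i < 2 ^ m := by
      intro m
      induction m with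
      | zero => simp
      | succ k ihk => rw [Finset.sum_range_succ, pow_succ]; omega
    exact lt_of_le_of_lt (Finset.sum_le_sum_of_subset h1) (hgeo y)
  have h4 : (ops.map (delta y)).sum % 2 ^ y
      = (∑ i ∈ ops.foldl applySet ∅, 2 ^ i) % 2 ^ y := by simpa [Nat.ModEq] using h3
  rw [h4, Nat.mod_eq_of_lt hfin]
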